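/- arXiv:1010.3339 — 2 statements merged into one kernel-verified Lean document; each statement's English description precedes it below -/
import Mathlib

section
/- Let z ↦ (a z, k z) be a contact element net (a map from ℤ² to contact elements) such that for all neighbouring indices z, z' one has a z ≠ a z' and k z ≠ k z'. Then (a, k) is a principal contact element net (any two neighbouring contact elements have a common oriented tangent sphere) if and only if for all neighbouring indices z, z' there exist two distinct rotations R and R' each mapping (a z, k z) to (a z', k z'), i.e. R (a z) = a z', R_lin (k z) = k z', R' (a z) = a z', R'_lin (k z) = k z', R ≠ R'. Moreover, in this case infinitely many such rotations exist. -/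
noncomputable section
local notation "⟪" x ", " y "⟫" => @inner ℝ _ _ x y

abbrev E3 : Type := EuclideanSpace ℝ (Fin 3)

/-- Cross product on `E3`. -/
def cross3 (a b : E3) : E3 :=
  WithLp.toLp 2 ![a 1 * b 2 - a 2 * b 1, a 2 * b 0 - a 0 * b 2, a 0 * b 1 - a 1 * b 0]

/-- The line through `a` with direction `v`. -/
def line (a v : E3) : Set E3 := {x | ∃ t : ℝ, x = a + t • v}

/-- Two contact elements have a common oriented tangent sphere. -/
def CommonTangentSphere (p n p' n' : E3) : Prop :=
  ∃ r : ℝ, p + r • n = p' + r • n'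

/-- Neighbouring indices in `ℤ²`. -/
def Neighbor (z z' : ℤ × ℤ) : Prop :=
  z' = z + (1, 0) ∨ z' = z + (0, 1) ∨ z = z' + (1, 0) ∨ z = z' + (0, 1)

/-- Principal contact element net. -/
def IsPCEN (p n : ℤ × ℤ → E3) : Prop :=
  (∀ z, ‖n z‖ = 1) ∧
  ∀ z z', Neighbor z z' → CommonTangentSphere (p z) (n z) (p z') (n z')

/-- Bäcklund mates with distance `d` and angle `φ`. -/
def BacklundMates (p n q m : ℤ × ℤ → E3) (d φ : ℝ) : Prop :=
  IsPCEN p n ∧ IsPCEN q m ∧ 0 < d ∧ Real.sin φ ≠ 0 ∧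
  ∀ z, ‖q z - p z‖ = d ∧ ⟪n z, m z⟫ = Real.cos φ ∧
    ⟪cross3 (n z) (m z), q z - p z⟫ = d * Real.sin φ ∧
    ⟪q z - p z, n z⟫ = 0 ∧ ⟪q z - p z, m z⟫ = 0

/-- The values of a net on the elementary quadrilateral at `z`. -/
def quadAt (p : ℤ × ℤ → E3) (z : ℤ × ℤ) : Fin 4 → E3 :=
  ![p z, p (z + (1, 0)), p (z + (1, 1)), p (z + (0, 1))]

/-- The vector area of a (spatial) quadrilateral. -/
def vectorArea (v : Fin 4 → E3) : E3 :=
  (1 / 2 : ℝ) • (cross3 (v 0) (v 1) + cross3 (v 1) (v 2) +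
    cross3 (v 2) (v 3) + cross3 (v 3) (v 0))

/-- Two lines (given by point and direction) are skew. -/
def SkewLines (a u b v : E3) : Prop := ⟪b - a, cross3 u v⟫ ≠ 0

/-- The twist of two skew oriented lines. -/
def twist (a u b v : E3) : ℝ := ‖cross3 u v‖ ^ 2 / ⟪b - a, cross3 u v⟫

/-- `R` is a rotation of `E3`: an orientation-preserving isometry, different from
the identity, whose fixed-point set contains a line. -/
def IsRotation (R : E3 ≃ᵃⁱ[ℝ] E3) : Prop :=
  0 < LinearMap.det R.linearIsometryEquiv.toLinearEquiv.toLinearMap ∧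
  R ≠ AffineIsometryEquiv.refl ℝ E3 ∧
  ∃ a v : E3, v ≠ 0 ∧ ∀ x ∈ line a v, R x = x

/-- `R` is a rotation about the line through `a` with direction `v`:
its fixed-point set is exactly that line. -/
def IsRotationAbout (R : E3 ≃ᵃⁱ[ℝ] E3) (a v : E3) : Prop :=
  v ≠ 0 ∧
  0 < LinearMap.det R.linearIsometryEquiv.toLinearEquiv.toLinearMap ∧
  R ≠ AffineIsometryEquiv.refl ℝ E3 ∧
  ∀ x : E3, R x = x ↔ x ∈ line a v



lemma inner_expand (x y : E3) : ⟪x, y⟫ = x 0 * y 0 + x 1 * y 1 + x 2 * y 2 := by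
  simp [PiLp.inner_apply, RCLike.inner_apply, Fin.sum_univ_three, mul_comm]

lemma cross3_apply0 (a b : E3) : cross3 a b 0 = a 1 * b 2 - a 2 * b 1 := rfl
lemma cross3_apply1 (a b : E3) : cross3 a b 1 = a 2 * b 0 - a 0 * b 2 := rfl
lemma cross3_apply2 (a b : E3) : cross3 a b 2 = a 0 * b 1 - a 1 * b 0 := rfl

lemma inner_cross_left (u w : E3) : ⟪u, cross3 u w⟫ = 0 := by
  simp only [inner_expand, cross3_apply0, cross3_apply1, cross3_apply2]; ring

lemma inner_cross_right (u w : E3) : ⟪w, cross3 u w⟫ = 0 := by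
  simp only [inner_expand, cross3_apply0, cross3_apply1, cross3_apply2]; ring

lemma cross_self_inner (u w : E3) :
    ⟪cross3 u w, cross3 u w⟫ = ⟪u,u⟫ * ⟪w,w⟫ - ⟪u,w⟫ ^ 2 := by
  simp only [inner_expand, cross3_apply0, cross3_apply1, cross3_apply2]; ring
def reflMap (u : E3) : E3 →ₗ[ℝ] E3 where
  toFun x := x - (2 * ⟪x, u⟫ / ⟪u, u⟫) • u
  map_add' x y := by
    simp only [inner_add_left]
    rw [show 2 * (⟪x,u⟫ + ⟪y,u⟫) / ⟪u,u⟫ = 2*⟪x,u⟫/⟪u,u⟫ + 2*⟪y,u⟫/⟪u,u⟫ by ring,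
      add_smul]
    abel
  map_smul' c x := by
    simp only [real_inner_smul_left, RingHom.id_apply, smul_sub]
    rw [show 2 * (c * ⟪x,u⟫) / ⟪u,u⟫ = c * (2*⟪x,u⟫/⟪u,u⟫) by ring, mul_smul]

lemma reflMap_apply (u x : E3) : reflMap u x = x - (2 * ⟪x, u⟫ / ⟪u, u⟫) • u := rfl

lemma reflMap_involutive (u : E3) : Function.Involutive (reflMap u) := by
  intro x
  by_cases h : ⟪u, u⟫ = 0
  · have hu : u = 0 := inner_self_eq_zero.mp h
    simp [reflMap_apply, hu]
  · simp only [reflMap_apply, inner_sub_left, real_inner_smul_left]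
    generalize ⟪x,u⟫ = A at *
    generalize hB : ⟪u,u⟫ = B at *
    rw [show 2 * (A - 2 * A / B * B) / B = -(2*A/B) by field_simp; ring]
    rw [neg_smul]
    abel

lemma reflMap_inner (u x y : E3) : ⟪reflMap u x, reflMap u y⟫ = ⟪x, y⟫ := by
  by_cases h : ⟪u, u⟫ = 0
  · have hu : u = 0 := inner_self_eq_zero.mp h
    simp [reflMap_apply, hu]
  · simp only [reflMap_apply, inner_sub_left, inner_sub_right, real_inner_smul_left,
      real_inner_smul_right]
    rw [real_inner_comm y u, real_inner_comm u x]
    generalize ⟪x,u⟫ = A at *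
    generalize ⟪y,u⟫ = C at *
    generalize ⟪x,y⟫ = D at *
    generalize hB : ⟪u,u⟫ = B at *
    field_simp
    ring

def refl3 (u : E3) : E3 ≃ₗᵢ[ℝ] E3 :=
  { LinearEquiv.ofInvolutive (reflMap u) (reflMap_involutive u) with
    norm_map' := fun x => by
      have h2 : ‖(reflMap u) x‖ ^ 2 = ‖x‖ ^ 2 := by
        rw [← real_inner_self_eq_norm_sq, ← real_inner_self_eq_norm_sq, reflMap_inner]
      calc ‖(reflMap u) x‖ = Real.sqrt (‖(reflMap u) x‖^2) := by
              rw [Real.sqrt_sq (norm_nonneg _)]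
        _ = Real.sqrt (‖x‖^2) := by rw [h2]
        _ = ‖x‖ := Real.sqrt_sq (norm_nonneg _) }

lemma refl3_apply (u x : E3) : refl3 u x = x - (2 * ⟪x, u⟫ / ⟪u, u⟫) • u := rfl

lemma refl3_apply_orth (u x : E3) (h : ⟪x, u⟫ = 0) : refl3 u x = x := by
  simp [refl3_apply, h]

lemma refl3_apply_self (u : E3) (hu : u ≠ 0) : refl3 u u = -u := by
  have h : ⟪u, u⟫ ≠ 0 := inner_self_ne_zero.mpr hu
  rw [refl3_apply, mul_div_assoc, div_self h, mul_one]
  module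
open Module Submodule

lemma finrank_E3 : finrank ℝ E3 = 3 := finrank_euclideanSpace_fin

lemma det_of_diag (b : Basis (Fin 3) ℝ E3) (f : E3 →ₗ[ℝ] E3) (d : Fin 3 → ℝ)
    (h : ∀ i, f (b i) = d i • b i) : LinearMap.det f = d 0 * d 1 * d 2 := by
  classical
  rw [← LinearMap.det_toMatrix b]
  have hm : LinearMap.toMatrix b b f = Matrix.diagonal d := by
    ext i j
    rw [LinearMap.toMatrix_apply, h j, map_smul, Basis.repr_self]
    by_cases hij : i = j
    · subst hij; simp [Matrix.diagonal]
    · simp [Matrix.diagonal, hij, Finsupp.single_apply, Ne.symm hij]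
  rw [hm, Matrix.det_diagonal, Fin.prod_univ_three]

lemma range_pair (q1 q2 : E3) : Set.range ![q1, q2] = {q1, q2} := by
  ext x; simp; tauto

lemma range_triple (u q1 q2 : E3) : Set.range ![u, q1, q2] = {u, q1, q2} := by
  ext x; simp; tauto

lemma exists_orth_pair (u : E3) (hu : u ≠ 0) :
    ∃ q₁ q₂ : E3, ⟪q₁, u⟫ = 0 ∧ ⟪q₂, u⟫ = 0 ∧ LinearIndependent ℝ ![q₁, q₂] ∧
      (⊤ : Submodule ℝ E3) ≤ span ℝ (Set.range ![u, q₁, q₂]) := by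
  haveI : Fact (finrank ℝ E3 = 2 + 1) := ⟨finrank_E3⟩
  set W : Submodule ℝ E3 := (ℝ ∙ u)ᗮ with hW
  have hrk : finrank ℝ W = 2 := finrank_orthogonal_span_singleton hu
  let b : Basis (Fin 2) ℝ W := finBasisOfFinrankEq ℝ W hrk
  have hmem : ∀ i : Fin 2, (b i : E3) ∈ W := fun i => (b i).2
  have hind : LinearIndependent ℝ ![(b 0 : E3), (b 1 : E3)] := by
    have h1 : LinearIndependent ℝ (fun i : Fin 2 => (b i : E3)) :=
      b.linearIndependent.map' W.subtype (ker_subtype W)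
    have h2 : ![(b 0 : E3), (b 1 : E3)] = fun i : Fin 2 => (b i : E3) := by
      funext i; fin_cases i <;> rfl
    rwa [h2]
  have hspanW : span ℝ {(b 0 : E3), (b 1 : E3)} = W := by
    apply eq_of_le_of_finrank_eq
    · rw [span_le]
      rintro x hx
      simp only [Set.mem_insert_iff, Set.mem_singleton_iff] at hx
      rcases hx with rfl | rfl
      exacts [hmem 0, hmem 1]
    · rw [← range_pair, finrank_span_eq_card hind, hrk]; rfl
  refine ⟨(b 0 : E3), (b 1 : E3),
    inner_left_of_mem_orthogonal (mem_span_singleton_self u) (hmem 0),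
    inner_left_of_mem_orthogonal (mem_span_singleton_self u) (hmem 1), hind, ?_⟩
  rw [range_triple]
  have : (ℝ ∙ u) ⊔ W = ⊤ := Submodule.sup_orthogonal_of_hasOrthogonalProjection
  rw [← this]
  apply sup_le
  · rw [span_le, Set.singleton_subset_iff]
    exact subset_span (by simp)
  · refine le_trans (le_of_eq hspanW.symm) (span_mono ?_)
    intro x hx
    simp only [Set.mem_insert_iff, Set.mem_singleton_iff] at hx ⊢
    tauto

lemma coe_lie (Q : E3 ≃ₗᵢ[ℝ] E3) (x : E3) : Q.toLinearEquiv.toLinearMap x = Q x := rfl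

lemma det_refl3 (u : E3) (hu : u ≠ 0) :
    LinearMap.det (refl3 u).toLinearEquiv.toLinearMap = -1 := by
  obtain ⟨q1, q2, h1, h2, hind, hspan⟩ := exists_orth_pair u hu
  let b := basisOfTopLeSpanOfCardEqFinrank ![u, q1, q2] hspan (by simp [finrank_E3])
  have hb : ⇑b = ![u, q1, q2] := coe_basisOfTopLeSpanOfCardEqFinrank _ _ _
  have hd := det_of_diag b (refl3 u).toLinearEquiv.toLinearMap ![-1, 1, 1] ?_
  · simpa using hd
  · intro i
    fin_cases i <;> simp only [hb]
    · show (refl3 u) u = (-1 : ℝ) • u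
      rw [refl3_apply_self u hu]; module
    · show (refl3 u) q1 = (1 : ℝ) • q1
      rw [refl3_apply_orth u q1 h1]; module
    · show (refl3 u) q2 = (1 : ℝ) • q2
      rw [refl3_apply_orth u q2 h2]; module

/-- A linear isometry fixing two independent vectors, with positive determinant, is the
identity. -/
lemma eq_id_of_fix_two (Q : E3 ≃ₗᵢ[ℝ] E3) (u v : E3) (hind : LinearIndependent ℝ ![u, v])
    (hu : Q u = u) (hv : Q v = v)
    (hdet : 0 < LinearMap.det Q.toLinearEquiv.toLinearMap) : ∀ x, Q x = x := by
  classical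
  set W : Submodule ℝ E3 := span ℝ (Set.range ![u, v]) with hWdef
  have hfixW : ∀ z ∈ W, Q z = z := by
    intro z hz
    induction hz using span_induction with
    | mem x hx =>
      obtain ⟨i, rfl⟩ := hx
      fin_cases i <;> simpa
    | zero => simp
    | add x y _ _ ihx ihy => rw [map_add, ihx, ihy]
    | smul c x _ ihx => rw [map_smul, ihx]
  have hrkW : finrank ℝ W = 2 := by
    rw [hWdef, finrank_span_eq_card hind]; rfl
  have hrkK : finrank ℝ Wᗮ = 1 := by
    have := W.finrank_add_finrank_orthogonal
    rw [hrkW, finrank_E3] at this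
    omega
  obtain ⟨w, hwK, hw0⟩ : ∃ w ∈ Wᗮ, w ≠ 0 := by
    have : 0 < Module.rank ℝ Wᗮ := by
      rw [← finrank_eq_rank, hrkK]; norm_num
    exact exists_mem_ne_zero_of_rank_pos this
  have hQw : Q w ∈ Wᗮ := by
    rw [mem_orthogonal]
    intro z hz
    calc ⟪z, Q w⟫ = ⟪Q z, Q w⟫ := by rw [hfixW z hz]
      _ = ⟪z, w⟫ := Q.inner_map_map z w
      _ = 0 := (mem_orthogonal _ _).mp hwK z hz
  have hK : (ℝ ∙ w) = Wᗮ := by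
    apply eq_of_le_of_finrank_eq
    · rw [span_le, Set.singleton_subset_iff]; exact hwK
    · rw [finrank_span_singleton hw0, hrkK]
  obtain ⟨t, ht⟩ : ∃ t : ℝ, Q w = t • w := by
    rw [← hK] at hQw
    obtain ⟨t, ht⟩ := mem_span_singleton.mp hQw
    exact ⟨t, ht.symm⟩
  have ht2 : t = 1 ∨ t = -1 := by
    have h1 : ⟪Q w, Q w⟫ = ⟪w, w⟫ := Q.inner_map_map w w
    rw [ht, real_inner_smul_left, real_inner_smul_right] at h1
    have hww : ⟪w, w⟫ ≠ 0 := inner_self_ne_zero.mpr hw0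
    have h3 : (t * t - 1) * ⟪w, w⟫ = 0 := by linear_combination h1
    have : t * t = 1 := by
      rcases mul_eq_zero.mp h3 with h | h
      · linarith
      · exact absurd h hww
    exact mul_self_eq_one_iff.mp this
  have hspan3 : (⊤ : Submodule ℝ E3) ≤ span ℝ (Set.range ![u, v, w]) := by
    have hsup : W ⊔ Wᗮ = ⊤ := Submodule.sup_orthogonal_of_hasOrthogonalProjection
    rw [← hsup]
    apply sup_le
    · rw [hWdef, span_le]
      rintro x ⟨i, rfl⟩
      fin_cases i
      · exact subset_span (by rw [range_triple]; simp)
      · exact subset_span (by rw [range_triple]; simp)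
    · rw [← hK, span_le, Set.singleton_subset_iff]
      exact subset_span (by rw [range_triple]; simp)
  rcases ht2 with rfl | rfl
  · -- Q fixes u, v, w hence everything
    intro x
    have hx : x ∈ span ℝ (Set.range ![u, v, w]) := hspan3 trivial
    induction hx using span_induction with
    | mem y hy =>
      obtain ⟨i, rfl⟩ := hy
      fin_cases i
      · simpa
      · simpa
      · simpa using ht
    | zero => simp
    | add x y _ _ ihx ihy => rw [map_add, ihx, ihy]
    | smul c x _ ihx => rw [map_smul, ihx]
  · exfalso
    let b := basisOfTopLeSpanOfCardEqFinrank ![u, v, w] hspan3 (by simp [finrank_E3])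
    have hb : ⇑b = ![u, v, w] := coe_basisOfTopLeSpanOfCardEqFinrank _ _ _
    have hd := det_of_diag b Q.toLinearEquiv.toLinearMap ![1, 1, -1] ?_
    · rw [hd] at hdet; norm_num [Matrix.cons_val_two] at hdet
    · intro i
      fin_cases i <;> simp only [hb]
      · show Q u = (1 : ℝ) • u
        rw [hu]; module
      · show Q v = (1 : ℝ) • v
        rw [hv]; module
      · show Q w = (-1 : ℝ) • w
        rw [ht]

/-- Rotation about the point `c` with linear part `Q`. -/
def rotAt (c : E3) (Q : E3 ≃ₗᵢ[ℝ] E3) : E3 ≃ᵃⁱ[ℝ] E3 :=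
  AffineIsometryEquiv.mk' (fun x => c + Q (x - c)) Q c (fun p' => by
    simp only [vsub_eq_sub, vadd_eq_add, sub_self, map_zero, add_zero]
    abel)

lemma rotAt_apply (c : E3) (Q : E3 ≃ₗᵢ[ℝ] E3) (x : E3) : rotAt c Q x = c + Q (x - c) := rfl

lemma rotAt_lin (c : E3) (Q : E3 ≃ₗᵢ[ℝ] E3) : (rotAt c Q).linearIsometryEquiv = Q :=
  AffineIsometryEquiv.linearIsometryEquiv_mk' _ _ _ _

lemma unit_inner_ne_one {n n' : E3} (hn : ‖n‖ = 1) (hn' : ‖n'‖ = 1) (hnn : n ≠ n') :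
    ⟪n, n'⟫ ≠ 1 := by
  intro h
  have hu : ⟪n - n', n - n'⟫ = 0 := by
    have e1 : ⟪n, n⟫ = 1 := by rw [real_inner_self_eq_norm_sq, hn]; norm_num
    have e2 : ⟪n', n'⟫ = 1 := by rw [real_inner_self_eq_norm_sq, hn']; norm_num
    have e3 : ⟪n', n⟫ = 1 := by rw [real_inner_comm]; exact h
    simp only [inner_sub_left, inner_sub_right, e1, e2, e3, h]
    ring
  exact hnn (sub_eq_zero.mp (inner_self_eq_zero.mp hu))

lemma cross3_ne_zero {u w : E3} (hu : u ≠ 0) (hw : w ≠ 0)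
    (hnp : ∀ r : ℝ, w ≠ r • u) : cross3 u w ≠ 0 := by
  intro h0
  have hL : ⟪u,u⟫ * ⟪w,w⟫ - ⟪u,w⟫ ^ 2 = 0 := by
    rw [← cross_self_inner, h0]; simp
  have habs : ‖⟪u, w⟫‖ = ‖u‖ * ‖w‖ := by
    have h1 : ⟪u,w⟫ ^ 2 = (‖u‖ * ‖w‖) ^ 2 := by
      rw [mul_pow, ← real_inner_self_eq_norm_sq, ← real_inner_self_eq_norm_sq]
      linarith
    rw [Real.norm_eq_abs, ← Real.sqrt_sq_eq_abs, h1, Real.sqrt_sq (by positivity)]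
  obtain ⟨r, hr0, hr⟩ := (norm_inner_eq_norm_iff hu hw).mp habs
  exact hnp r hr

/-- The infinite family of rotations in the forward direction. -/
lemma forward_inf (p n p' n' : E3) (hn : ‖n‖ = 1) (hn' : ‖n'‖ = 1) (hpp : p ≠ p')
    (hnn : n ≠ n') (r : ℝ) (hr : p + r • n = p' + r • n') :
    {R : E3 ≃ᵃⁱ[ℝ] E3 | IsRotation R ∧ R p = p' ∧
      R.linearIsometryEquiv n = n'}.Infinite := by
  classical
  set c : E3 := p + r • n with hc
  set u : E3 := n - n' with hudef
  have hu0 : u ≠ 0 := sub_ne_zero.mpr hnn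
  have e1 : ⟪n, n⟫ = 1 := by rw [real_inner_self_eq_norm_sq, hn]; norm_num
  have e2 : ⟪n', n'⟫ = 1 := by rw [real_inner_self_eq_norm_sq, hn']; norm_num
  have hne1 : ⟪n, n'⟫ ≠ 1 := unit_inner_ne_one hn hn' hnn
  have hun' : ⟪u, n'⟫ ≠ 0 := by
    rw [hudef, inner_sub_left, e2]
    intro h
    exact hne1 (by linarith)
  have hn'0 : n' ≠ 0 := fun h => by rw [h] at hn'; simp at hn'
  -- refl3 u sends n to n'
  have hrefl_u_n : refl3 u n = n' := by
    have hnu : ⟪n, u⟫ = 1 - ⟪n, n'⟫ := by rw [hudef, inner_sub_right, e1]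
    have huu : ⟪u, u⟫ = 2 * (1 - ⟪n, n'⟫) := by
      rw [hudef, inner_sub_left, inner_sub_right, inner_sub_right, e1, e2,
        real_inner_comm n' n]
      ring
    rw [refl3_apply, hnu, huu]
    have hA : 2 * (1 - ⟪n,n'⟫) ≠ 0 := by
      intro h; apply hne1; linarith
    rw [div_self hA, one_smul, hudef]
    abel
  obtain ⟨q1, q2, hq1, hq2, hqind, -⟩ := exists_orth_pair n' hn'0
  have hqind' := LinearIndependent.pair_iff.mp hqind
  -- the family of axis-plane normals
  set w : ℝ → E3 := fun t => q1 + t • q2 with hwdef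
  have hw0 : ∀ t, w t ≠ 0 := by
    intro t h
    have := hqind' 1 t (by rw [one_smul]; exact h)
    norm_num at this
  have hwn' : ∀ t, ⟪w t, n'⟫ = 0 := by
    intro t
    rw [hwdef]
    simp only [inner_add_left, real_inner_smul_left, hq1, hq2]
    ring
  -- the rotations
  set Q : ℝ → (E3 ≃ₗᵢ[ℝ] E3) := fun t => (refl3 u).trans (refl3 (w t)) with hQdef
  have hQapp : ∀ t x, Q t x = refl3 (w t) (refl3 u x) := fun t x => rfl
  have hQn : ∀ t, Q t n = n' := by
    intro t
    rw [hQapp, hrefl_u_n,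
      refl3_apply_orth (w t) n' (by rw [real_inner_comm]; exact hwn' t)]
  set R : ℝ → (E3 ≃ᵃⁱ[ℝ] E3) := fun t => rotAt c (Q t) with hRdef
  have hRp : ∀ t, R t p = p' := by
    intro t
    rw [hRdef]
    show c + Q t (p - c) = p'
    have hpc : p - c = -(r • n) := by rw [hc]; abel
    rw [hpc, map_neg, map_smul, hQn t]
    have hp' : p' = c - r • n' := eq_sub_of_add_eq hr.symm
    rw [hp']; abel
  have hRlin : ∀ t, (R t).linearIsometryEquiv n = n' := by
    intro t; rw [hRdef]; show (rotAt c (Q t)).linearIsometryEquiv n = n'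
    rw [rotAt_lin]; exact hQn t
  have hdet : ∀ t, 0 < LinearMap.det (R t).linearIsometryEquiv.toLinearEquiv.toLinearMap := by
    intro t
    have hlin : (R t).linearIsometryEquiv = Q t := rotAt_lin _ _
    rw [hlin]
    have hcomp : (Q t).toLinearEquiv.toLinearMap
        = ((refl3 (w t)).toLinearEquiv.toLinearMap).comp ((refl3 u).toLinearEquiv.toLinearMap) :=
      rfl
    rw [hcomp, LinearMap.det_comp, det_refl3 _ (hw0 t), det_refl3 _ hu0]
    norm_num
  have hfixline : ∀ t, ∀ x ∈ line c (cross3 u (w t)), R t x = x := by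
    intro t x hx
    obtain ⟨s, rfl⟩ := hx
    rw [hRdef]
    show c + Q t ((c + s • cross3 u (w t)) - c) = c + s • cross3 u (w t)
    have h1 : (c + s • cross3 u (w t)) - c = s • cross3 u (w t) := by abel
    rw [h1, map_smul, hQapp,
      refl3_apply_orth u (cross3 u (w t))
        (by rw [real_inner_comm]; exact inner_cross_left u (w t)),
      refl3_apply_orth (w t) (cross3 u (w t))
        (by rw [real_inner_comm]; exact inner_cross_right u (w t))]
  have hv0 : ∀ t, cross3 u (w t) ≠ 0 := by
    intro t
    apply cross3_ne_zero hu0 (hw0 t)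
    intro s hs
    have h1 := hwn' t
    rw [hs, real_inner_smul_left] at h1
    rcases mul_eq_zero.mp h1 with h | h
    · exact hw0 t (by rw [hs, h, zero_smul])
    · exact hun' h
  have hmem : ∀ t, R t ∈ {S : E3 ≃ᵃⁱ[ℝ] E3 | IsRotation S ∧ S p = p' ∧
      S.linearIsometryEquiv n = n'} := by
    intro t
    refine ⟨⟨hdet t, ?_, c, cross3 u (w t), hv0 t, hfixline t⟩, hRp t, hRlin t⟩
    intro heq
    have : R t (c + n) = c + n := by rw [heq]; rfl
    rw [hRdef] at this
    have h2 : c + Q t ((c + n) - c) = c + n := this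
    rw [show (c + n) - c = n by abel, hQn t] at h2
    exact hnn (by have := add_left_cancel h2; rw [this])
  -- injectivity
  have hinj : Function.Injective R := by
    intro t s hts
    have happ : ∀ x, refl3 (w t) x = refl3 (w s) x := by
      intro x
      have h1 : R t (c + refl3 u x) = R s (c + refl3 u x) := by rw [hts]
      have h2 : c + Q t (refl3 u x) = c + Q s (refl3 u x) := by
        simpa [hRdef, rotAt_apply, add_sub_cancel_left] using h1
      have h3 := add_left_cancel h2
      have hinv : ∀ y : E3, refl3 u (refl3 u y) = y := fun y => reflMap_involutive u y
      rw [hQapp, hQapp, hinv x] at h3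
      exact h3
    -- apply at w t
    have h4 : refl3 (w s) (w t) = -(w t) := by
      rw [← happ (w t), refl3_apply_self _ (hw0 t)]
    rw [refl3_apply] at h4
    set κ : ℝ := 2 * ⟪w t, w s⟫ / ⟪w s, w s⟫ with hκ
    have h4' : w t - κ • w s + w t = 0 := by rw [h4]; abel
    have h2 : ((2:ℝ)) • (w t) - κ • w s = 0 := by rw [← h4']; module
    have h5 : w t = (κ/2) • w s := by
      refine smul_right_injective E3 (by norm_num : (2:ℝ) ≠ 0) ?_
      show (2:ℝ) • w t = (2:ℝ) • ((κ/2) • w s)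
      rw [smul_smul, show (2:ℝ) * (κ/2) = κ by ring, ← sub_eq_zero]
      exact h2
    have h7 : (q1 + t • q2 : E3) = (κ/2) • (q1 + s • q2) := h5
    have h8 : (1 - κ/2) • q1 + (t - κ/2*s) • q2 = 0 := by
      rw [← sub_eq_zero] at h7
      rw [← h7]
      module
    obtain ⟨hA, hB⟩ := hqind' _ _ h8
    have hκ2 : κ / 2 = 1 := by linarith
    rw [hκ2] at hB
    linarith
  exact Set.infinite_of_injective_forall_mem hinj hmem

lemma sub_inner_zero_of_ball (p p' x y : E3)
    (h1 : ⟪x - p, x - p⟫ = ⟪x - p', x - p'⟫)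
    (h2 : ⟪y - p, y - p⟫ = ⟪y - p', y - p'⟫) :
    ⟪x - y, p' - p⟫ = 0 := by
  simp only [inner_sub_left, inner_sub_right] at *
  rw [real_inner_comm p x, real_inner_comm p' x, real_inner_comm p y, real_inner_comm p' y] at *
  linarith

lemma sub_inner_zero_of_tang (n n' x y : E3)
    (h1 : ⟪x, n⟫ - ⟪x, n'⟫ = ⟪y, n⟫ - ⟪y, n'⟫) :
    ⟪x - y, n - n'⟫ = 0 := by
  simp only [inner_sub_left, inner_sub_right] at *
  linarith

/-- Key facts about fixed points of a rotation carrying `(p,n)` to `(p',n')`. -/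
lemma fixed_point_conds (R : E3 ≃ᵃⁱ[ℝ] E3) (p n p' n' x : E3)
    (hRp : R p = p') (hRn : R.linearIsometryEquiv n = n') (hx : R x = x) :
    ⟪x - p, x - p⟫ = ⟪x - p', x - p'⟫ ∧ ⟪x, n⟫ - ⟪p, n⟫ = ⟪x, n'⟫ - ⟪p', n'⟫ := by
  have hvsub : R.linearIsometryEquiv (x - p) = x - p' := by
    have := R.map_vsub x p
    rw [hx, hRp] at this
    simpa [vsub_eq_sub] using this
  constructor
  · calc ⟪x - p, x - p⟫
        = ⟪R.linearIsometryEquiv (x - p), R.linearIsometryEquiv (x - p)⟫ :=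
          (R.linearIsometryEquiv.inner_map_map _ _).symm
      _ = ⟪x - p', x - p'⟫ := by rw [hvsub]
  · have h := R.linearIsometryEquiv.inner_map_map (x - p) n
    rw [hvsub, hRn] at h
    simp only [inner_sub_left] at h
    linarith

/-- Converse: two distinct rotations force a common tangent sphere. -/
lemma converse_cts (p n p' n' : E3) (hpp : p ≠ p') (hnn : n ≠ n')
    (R R' : E3 ≃ᵃⁱ[ℝ] E3) (hR : IsRotation R) (hR' : IsRotation R') (hRR' : R ≠ R')
    (hRp : R p = p') (hRn : R.linearIsometryEquiv n = n')
    (hR'p : R' p = p') (hR'n : R'.linearIsometryEquiv n = n') :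
    ∃ r : ℝ, p + r • n = p' + r • n' := by
  classical
  by_contra hcon
  push_neg at hcon
  have hcon' : ∀ r : ℝ, p' - p ≠ r • (n - n') := by
    intro r h
    apply hcon r
    have : p' = p + r • (n - n') := by rw [← h]; abel
    rw [this]
    rw [smul_sub]
    abel
  -- independence of p'-p and n-n'
  have hind : LinearIndependent ℝ ![p' - p, n - n'] := by
    rw [LinearIndependent.pair_iff]
    intro s t hst
    rcases eq_or_ne s 0 with rfl | hs
    · rw [zero_smul, zero_add] at hst
      refine ⟨rfl, ?_⟩
      by_contra ht
      exact sub_ne_zero.mpr hnn (by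
        have := smul_eq_zero.mp hst
        tauto)
    · exfalso
      apply hcon' (-t/s)
      have : p' - p = (-t/s) • (n - n') := by
        have h2 : s • (p' - p) = -t • (n - n') := by
          rw [← sub_eq_zero, ← hst]; module
        have := congrArg (fun z : E3 => (s⁻¹ : ℝ) • z) h2
        simp only [smul_smul] at this
        rw [inv_mul_cancel₀ hs, one_smul] at this
        rw [this]
        congr 1
        ring
      exact this
  obtain ⟨hdet, hRne, aR, vR, hvR, hfixR⟩ := hR
  obtain ⟨hdet', hR'ne, aR', vR', hvR', hfixR'⟩ := hR'
  -- membership of differences of fixed points in the orthogonal complement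
  set W : Submodule ℝ E3 := Submodule.span ℝ (Set.range ![p' - p, n - n']) with hWdef
  have hWmem : ∀ x y : E3,
      (⟪x - p, x - p⟫ = ⟪x - p', x - p'⟫ ∧ ⟪x, n⟫ - ⟪p, n⟫ = ⟪x, n'⟫ - ⟪p', n'⟫) →
      (⟪y - p, y - p⟫ = ⟪y - p', y - p'⟫ ∧ ⟪y, n⟫ - ⟪p, n⟫ = ⟪y, n'⟫ - ⟪p', n'⟫) →
      x - y ∈ Wᗮ := by
    intro x y hcx hcy
    have hF : ⟪x - y, p' - p⟫ = 0 := sub_inner_zero_of_ball p p' x y hcx.1 hcy.1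
    have hG : ⟪x - y, n - n'⟫ = 0 :=
      sub_inner_zero_of_tang n n' x y (by linarith [hcx.2, hcy.2])
    rw [Submodule.mem_orthogonal]
    intro z hz
    rw [hWdef] at hz
    induction hz using Submodule.span_induction with
    | mem g hg =>
      obtain ⟨i, rfl⟩ := hg
      fin_cases i
      · rw [real_inner_comm]; exact hF
      · rw [real_inner_comm]; exact hG
    | zero => simp
    | add f g _ _ ihf ihg => rw [inner_add_left, ihf, ihg, add_zero]
    | smul c f _ ihf => rw [real_inner_smul_left, ihf, mul_zero]
  have hcondR : ∀ x : E3, R x = x →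
      (⟪x - p, x - p⟫ = ⟪x - p', x - p'⟫ ∧ ⟪x, n⟫ - ⟪p, n⟫ = ⟪x, n'⟫ - ⟪p', n'⟫) :=
    fun x hx => fixed_point_conds R p n p' n' x hRp hRn hx
  have hcondR' : ∀ x : E3, R' x = x →
      (⟪x - p, x - p⟫ = ⟪x - p', x - p'⟫ ∧ ⟪x, n⟫ - ⟪p, n⟫ = ⟪x, n'⟫ - ⟪p', n'⟫) :=
    fun x hx => fixed_point_conds R' p n p' n' x hR'p hR'n hx
  have hmemline : ∀ (b v : E3) (τ : ℝ), b + τ • v ∈ line b v := fun b v τ => ⟨τ, rfl⟩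
  have hself : ∀ b v : E3, b ∈ line b v := fun b v => ⟨0, by rw [zero_smul, add_zero]⟩
  -- the three difference vectors lie in `Wᗮ`
  have hvRK : vR ∈ Wᗮ := by
    have := hWmem (aR + (1:ℝ) • vR) aR
      (hcondR _ (hfixR _ (hmemline aR vR 1))) (hcondR _ (hfixR _ (hself aR vR)))
    rw [one_smul, add_sub_cancel_left] at this
    exact this
  have hvR'K : vR' ∈ Wᗮ := by
    have := hWmem (aR' + (1:ℝ) • vR') aR'
      (hcondR' _ (hfixR' _ (hmemline aR' vR' 1))) (hcondR' _ (hfixR' _ (hself aR' vR')))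
    rw [one_smul, add_sub_cancel_left] at this
    exact this
  have haK : aR' - aR ∈ Wᗮ :=
    hWmem aR' aR (hcondR' _ (hfixR' _ (hself aR' vR'))) (hcondR _ (hfixR _ (hself aR vR)))
  -- `Wᗮ` is the line spanned by `vR`
  have hrkW : Module.finrank ℝ W = 2 := by
    rw [hWdef, finrank_span_eq_card hind]; rfl
  have hrkK : Module.finrank ℝ Wᗮ = 1 := by
    have := W.finrank_add_finrank_orthogonal
    rw [hrkW, finrank_E3] at this
    omega
  have hK : (ℝ ∙ vR) = Wᗮ := by
    apply eq_of_le_of_finrank_eq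
    · rw [Submodule.span_le, Set.singleton_subset_iff]; exact hvRK
    · rw [finrank_span_singleton hvR, hrkK]
  obtain ⟨t, ht⟩ : ∃ t : ℝ, vR' = t • vR := by
    rw [← hK] at hvR'K
    obtain ⟨t, ht⟩ := Submodule.mem_span_singleton.mp hvR'K
    exact ⟨t, ht.symm⟩
  obtain ⟨s, hs⟩ : ∃ s : ℝ, aR' - aR = s • vR := by
    rw [← hK] at haK
    obtain ⟨s, hs⟩ := Submodule.mem_span_singleton.mp haK
    exact ⟨s, hs.symm⟩
  have ht0 : t ≠ 0 := by
    intro h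
    rw [h, zero_smul] at ht
    exact hvR' ht
  -- R' fixes the axis of R pointwise
  have hfixR'line : ∀ x ∈ line aR vR, R' x = x := by
    rintro x ⟨τ, rfl⟩
    have hxeq : aR + τ • vR = aR' + ((τ - s)/t) • vR' := by
      rw [ht, smul_smul, div_mul_cancel₀ _ ht0]
      have : aR' = aR + s • vR := by rw [← hs]; abel
      rw [this, sub_smul]
      abel
    rw [hxeq]
    exact hfixR' _ (hmemline aR' vR' _)
  -- the composed isometry S = R'⁻¹ ∘ R
  set S : E3 ≃ᵃⁱ[ℝ] E3 := R.trans R'.symm with hSdef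
  have hSapp : ∀ x : E3, S x = R'.symm (R x) := fun x => rfl
  have hSfix : ∀ x ∈ line aR vR, S x = x := by
    intro x hx
    rw [hSapp, hfixR _ hx]
    nth_rewrite 1 [← hfixR'line x hx]
    exact AffineIsometryEquiv.symm_apply_apply _ _
  have hSp : S p = p := by
    rw [hSapp, hRp, ← hR'p, AffineIsometryEquiv.symm_apply_apply]
  -- pointwise description of linear parts
  have hlin_eval : ∀ (F : E3 ≃ᵃⁱ[ℝ] E3) (z : E3), F.linearIsometryEquiv z = F z - F 0 := by
    intro F z
    have := F.map_vsub z 0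
    simpa [vsub_eq_sub] using this
  have hlinfix : ∀ (F : E3 ≃ᵃⁱ[ℝ] E3) (x y : E3), F x = x → F y = y →
      F.linearIsometryEquiv (x - y) = x - y := by
    intro F x y hx hy
    have := F.map_vsub x y
    rw [hx, hy] at this
    simpa [vsub_eq_sub] using this
  have hSvR : S.linearIsometryEquiv vR = vR := by
    have := hlinfix S (aR + (1:ℝ) • vR) aR
      (hSfix _ (hmemline aR vR 1)) (hSfix _ (hself aR vR))
    rw [one_smul, add_sub_cancel_left] at this
    exact this
  have hSpa : S.linearIsometryEquiv (p - aR) = p - aR :=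
    hlinfix S p aR hSp (hSfix _ (hself aR vR))
  -- p is not on the axis
  have hpnotline : p ∉ line aR vR := by
    rintro ⟨τ, rfl⟩
    exact hpp ((hfixR _ (hmemline aR vR τ)).symm.trans hRp)
  have hind2 : LinearIndependent ℝ ![vR, p - aR] := by
    rw [LinearIndependent.pair_iff]
    intro α β hab
    rcases eq_or_ne β 0 with rfl | hb
    · rw [zero_smul, add_zero] at hab
      exact ⟨smul_eq_zero.mp hab |>.resolve_right hvR, rfl⟩
    · exfalso
      apply hpnotline
      refine ⟨-(α/β), ?_⟩
      have h1 : p - aR = (-(α/β)) • vR := by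
        have h2 : β • (p - aR) = -α • vR := by
          rw [← sub_eq_zero, ← hab]; module
        have h3 := congrArg (fun z : E3 => (β⁻¹ : ℝ) • z) h2
        simp only [smul_smul] at h3
        rw [inv_mul_cancel₀ hb, one_smul] at h3
        rw [h3]
        congr 1
        field_simp
      rw [← h1]
      abel
  -- determinant of the linear part of S is positive
  have hdetS : 0 < LinearMap.det S.linearIsometryEquiv.toLinearEquiv.toLinearMap := by
    have hcomp : S.linearIsometryEquiv.toLinearEquiv.toLinearMap
        = (R'.symm.linearIsometryEquiv.toLinearEquiv.toLinearMap).comp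
            (R.linearIsometryEquiv.toLinearEquiv.toLinearMap) := by
      refine LinearMap.ext fun z => ?_
      show S.linearIsometryEquiv z = R'.symm.linearIsometryEquiv (R.linearIsometryEquiv z)
      rw [hlin_eval S z, hlin_eval R z, hSapp, hSapp]
      have := R'.symm.map_vsub (R z) (R 0)
      simpa [vsub_eq_sub] using this.symm
    have hinv : (R'.symm.linearIsometryEquiv.toLinearEquiv.toLinearMap).comp
        (R'.linearIsometryEquiv.toLinearEquiv.toLinearMap) = LinearMap.id := by
      refine LinearMap.ext fun z => ?_
      show R'.symm.linearIsometryEquiv (R'.linearIsometryEquiv z) = z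
      rw [hlin_eval R' z]
      have := R'.symm.map_vsub (R' z) (R' 0)
      rw [AffineIsometryEquiv.symm_apply_apply, AffineIsometryEquiv.symm_apply_apply] at this
      simpa [vsub_eq_sub] using this
    have hdet1 : LinearMap.det (R'.symm.linearIsometryEquiv.toLinearEquiv.toLinearMap) *
        LinearMap.det (R'.linearIsometryEquiv.toLinearEquiv.toLinearMap) = 1 := by
      rw [← LinearMap.det_comp, hinv, LinearMap.det_id]
    have hpos : 0 < LinearMap.det (R'.symm.linearIsometryEquiv.toLinearEquiv.toLinearMap) := by
      rcases lt_trichotomy (LinearMap.det (R'.symm.linearIsometryEquiv.toLinearEquiv.toLinearMap)) 0 with h | h | h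
      · nlinarith
      · rw [h] at hdet1; norm_num at hdet1
      · exact h
    rw [hcomp, LinearMap.det_comp]
    exact mul_pos hpos hdet
  -- S is the identity, contradiction
  have hSid := eq_id_of_fix_two S.linearIsometryEquiv vR (p - aR) hind2 hSvR hSpa hdetS
  apply hRR'
  apply AffineIsometryEquiv.ext
  intro x
  have hx : S x = x := by
    have h1 := S.map_vsub x aR
    rw [hSid (x -ᵥ aR), hSfix _ (hself aR vR)] at h1
    have h2 := congrArg (fun z : E3 => z + aR) h1
    simpa [vsub_eq_sub, sub_add_cancel] using h2.symm
  have := congrArg R' (hSapp x ▸ hx)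
  rw [AffineIsometryEquiv.apply_symm_apply] at this
  exact this

/-- **Proposition.**  A contact element net `(a, k)` (with neighbouring points and
normals distinct) is a principal contact element net if and only if any two
neighbouring contact elements correspond in two distinct rotations; in this case
infinitely many such rotations exist. -/
theorem pcen_iff_two_rotations
    (a k : ℤ × ℤ → E3)
    (hk : ∀ z, ‖k z‖ = 1)
    (ha : ∀ z z', Neighbor z z' → a z ≠ a z')
    (hkk : ∀ z z', Neighbor z z' → k z ≠ k z') :
    ((∀ z z', Neighbor z z' →
        CommonTangentSphere (a z) (k z) (a z') (k z')) ↔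
      (∀ z z', Neighbor z z' →
        ∃ R R' : E3 ≃ᵃⁱ[ℝ] E3, IsRotation R ∧ IsRotation R' ∧ R ≠ R' ∧
          R (a z) = a z' ∧ R.linearIsometryEquiv (k z) = k z' ∧
          R' (a z) = a z' ∧ R'.linearIsometryEquiv (k z) = k z')) ∧
    ((∀ z z', Neighbor z z' →
        CommonTangentSphere (a z) (k z) (a z') (k z')) →
      ∀ z z', Neighbor z z' →
        {R : E3 ≃ᵃⁱ[ℝ] E3 | IsRotation R ∧ R (a z) = a z' ∧
          R.linearIsometryEquiv (k z) = k z'}.Infinite) := by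
  have main : ∀ z z', Neighbor z z' →
      CommonTangentSphere (a z) (k z) (a z') (k z') →
      {R : E3 ≃ᵃⁱ[ℝ] E3 | IsRotation R ∧ R (a z) = a z' ∧
        R.linearIsometryEquiv (k z) = k z'}.Infinite := by
    intro z z' hzz' hcts
    obtain ⟨r, hr⟩ := hcts
    exact forward_inf (a z) (k z) (a z') (k z') (hk z) (hk z')
      (ha z z' hzz') (hkk z z' hzz') r hr
  constructor
  · constructor
    · intro hcts z z' hzz'
      obtain ⟨R, hR, R', hR', hne⟩ := (main z z' hzz' (hcts z z' hzz')).nontrivial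
      exact ⟨R, R', hR.1, hR'.1, hne, hR.2.1, hR.2.2, hR'.2.1, hR'.2.2⟩
    · intro hrot z z' hzz'
      obtain ⟨R, R', h1, h2, h3, h4, h5, h6, h7⟩ := hrot z z' hzz'
      exact converse_cts (a z) (k z) (a z') (k z') (ha z z' hzz') (hkk z z' hzz')
        R R' h1 h2 h3 h4 h5 h6 h7
  · intro hcts z z' hzz'
    exact main z z' hzz' (hcts z z' hzz')
end
end

section
/- Let (p, n) and (p', n') be contact elements with a common oriented tangent sphere, say p + r • n = p' + r • n' = h for some r ∈ ℝ, with p ≠ p' and n ≠ n'. Let β = {x ∈ ℝ³ : ‖x − p‖ = ‖x − p'‖} be the bisector plane of p and p'. Then: (i) h ∈ β, and the reflection σ_β satisfies σ_β p = p' and (σ_β)_lin n = n'; (ii) for every point k ∈ β such that p', h, k are affinely independent, the composition R = σ_γ ∘ σ_β, where γ is the plane through p', h, k, is a rotation about the line through h and k with R p = p' and R_lin n = n'; (iii) R is the unique rotation about the line through h and k that maps (p, n) to (p', n'). -/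
noncomputable section
local notation "⟪" x ", " y "⟫" => @inner ℝ _ _ x y

/-- Reflection of the vector `x` in the linear plane with normal `u`. -/
def reflVec (u x : E3) : E3 := x - (2 * ⟪x, u⟫ / ⟪u, u⟫) • u

/-- Orthogonal reflection in the affine plane through `x₀` with normal `u`. -/
def reflPlane (x₀ u x : E3) : E3 := x₀ + reflVec u (x - x₀)

/-- Rotation of the vector `x` about the axis direction `e` (a unit vector)
through the angle `θ` (Rodrigues' formula). -/
def rotVec (e : E3) (θ : ℝ) (x : E3) : E3 :=
  Real.cos θ • x + Real.sin θ • cross3 e x + ((1 - Real.cos θ) * ⟪e, x⟫) • e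

/-- Rotation of the point `x` about the axis through `a` with unit direction `e`
through the angle `θ`. -/
def rotPt (a e : E3) (θ : ℝ) (x : E3) : E3 := a + rotVec e θ (x - a)

def reflVecL (u : E3) : E3 →ₗ[ℝ] E3 where
  toFun x := reflVec u x
  map_add' x y := by
    simp only [reflVec, inner_add_left]
    rw [show (2 * (⟪x, u⟫ + ⟪y, u⟫) / ⟪u, u⟫ : ℝ)
        = 2 * ⟪x, u⟫ / ⟪u, u⟫ + 2 * ⟪y, u⟫ / ⟪u, u⟫ by ring]
    module
  map_smul' c x := by
    simp only [reflVec, real_inner_smul_left, RingHom.id_apply]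
    rw [show (2 * (c * ⟪x, u⟫) / ⟪u, u⟫ : ℝ) = c * (2 * ⟪x, u⟫ / ⟪u, u⟫) by ring]
    module

lemma reflVec_inner (u x : E3) (hu : ⟪u, u⟫ ≠ 0) : ⟪reflVec u x, u⟫ = -⟪x, u⟫ := by
  simp only [reflVec, inner_sub_left, real_inner_smul_left]
  set a : ℝ := ⟪x, u⟫
  set d : ℝ := ⟪u, u⟫
  field_simp
  ring

lemma reflVec_involutive (u : E3) (hu : ⟪u, u⟫ ≠ 0) (x : E3) :
    reflVec u (reflVec u x) = x := by
  rw [show reflVec u (reflVec u x)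
      = reflVec u x - (2 * ⟪reflVec u x, u⟫ / ⟪u, u⟫) • u from rfl,
    reflVec_inner u x hu]
  rw [reflVec]
  rw [show (2 * -⟪x, u⟫ / ⟪u, u⟫ : ℝ) = -(2 * ⟪x, u⟫ / ⟪u, u⟫) by ring]
  module

lemma reflVec_norm (u x : E3) (hu : ⟪u, u⟫ ≠ 0) : ‖reflVec u x‖ = ‖x‖ := by
  have h : ⟪reflVec u x, reflVec u x⟫ = ⟪x, x⟫ := by
    simp only [reflVec, inner_sub_left, inner_sub_right, real_inner_smul_left,
      real_inner_smul_right, real_inner_comm u x]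
    set a : ℝ := ⟪x, u⟫
    set d : ℝ := ⟪u, u⟫
    field_simp
    ring
  have h2 := real_inner_self_eq_norm_mul_norm (reflVec u x)
  rw [h, real_inner_self_eq_norm_mul_norm] at h2
  exact (mul_self_inj_of_nonneg (norm_nonneg _) (norm_nonneg _)).1 h2.symm

lemma reflVec_of_inner_eq_zero (u x : E3) (h : ⟪x, u⟫ = 0) : reflVec u x = x := by
  simp [reflVec, h]

lemma reflVec_self (u : E3) (hu : ⟪u, u⟫ ≠ 0) : reflVec u u = -u := by
  rw [reflVec]
  set d : ℝ := ⟪u, u⟫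
  rw [show (2 * d / d : ℝ) = 2 by field_simp]
  module

def reflIso (u : E3) (hu : ⟪u, u⟫ ≠ 0) : E3 ≃ₗᵢ[ℝ] E3 where
  toLinearEquiv :=
    { reflVecL u with
      invFun := reflVec u
      left_inv := reflVec_involutive u hu
      right_inv := reflVec_involutive u hu }
  norm_map' x := reflVec_norm u x hu

@[simp] lemma reflIso_apply (u : E3) (hu : ⟪u, u⟫ ≠ 0) (x : E3) :
    reflIso u hu x = reflVec u x := rfl

open Module

lemma det_neg_one (b : Basis (Fin 3) ℝ E3) (f : E3 →ₗ[ℝ] E3)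
    (h0 : f (b 0) = -b 0) (h1 : f (b 1) = b 1) (h2 : f (b 2) = b 2) :
    LinearMap.det f = -1 := by
  rw [← LinearMap.det_toMatrix b, Matrix.det_fin_three]
  simp [LinearMap.toMatrix_apply, h0, h1, h2, Finsupp.single_apply]

lemma finrank_orth_singleton (u : E3) (hu : u ≠ 0) :
    finrank ℝ ((ℝ ∙ u)ᗮ : Submodule ℝ E3) = 2 := by
  have h1 : finrank ℝ (ℝ ∙ u : Submodule ℝ E3) = 1 := finrank_span_singleton hu
  have h2 := Submodule.finrank_add_finrank_orthogonal (K := (ℝ ∙ u : Submodule ℝ E3))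
  rw [h1, finrank_euclideanSpace_fin] at h2
  omega

lemma det_reflIso (u : E3) (hu : ⟪u, u⟫ ≠ 0) :
    LinearMap.det (reflIso u hu).toLinearEquiv.toLinearMap = -1 := by
  have hu0 : u ≠ 0 := fun h => hu (by simp [h])
  set K : Submodule ℝ E3 := (ℝ ∙ u)ᗮ with hKdef
  have hK : finrank ℝ K = 2 := finrank_orth_singleton u hu0
  let fb : Basis (Fin 2) ℝ K := finBasisOfFinrankEq ℝ K hK
  let g : Fin 3 → E3 := Fin.cons u (fun i => (fb i : E3))
  have hgind : LinearIndependent ℝ g := by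
    rw [show g = Fin.cons u (K.subtype ∘ fb) from rfl, linearIndependent_fin_cons]
    constructor
    · exact fb.linearIndependent.map' K.subtype (Submodule.ker_subtype K)
    · rw [Set.range_comp, ← Submodule.map_span, fb.span_eq, Submodule.map_top,
        Submodule.range_subtype]
      intro hmem
      exact hu ((Submodule.mem_orthogonal _ u).1 hmem u (Submodule.mem_span_singleton_self u))
  let b : Basis (Fin 3) ℝ E3 := basisOfLinearIndependentOfCardEqFinrank hgind
    (by simp [finrank_euclideanSpace_fin])
  have hb : ⇑b = g := coe_basisOfLinearIndependentOfCardEqFinrank _ _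
  have hmemK : ∀ i : Fin 2, ⟪(fb i : E3), u⟫ = 0 := fun i => by
    rw [real_inner_comm]
    exact (Submodule.mem_orthogonal _ _).1 (fb i).2 u (Submodule.mem_span_singleton_self u)
  apply det_neg_one b
  · rw [hb, show g 0 = u from rfl]; exact reflVec_self u hu
  · rw [hb, show g 1 = (fb 0 : E3) from rfl]; exact reflVec_of_inner_eq_zero u _ (hmemK 0)
  · rw [hb, show g 2 = (fb 1 : E3) from rfl]; exact reflVec_of_inner_eq_zero u _ (hmemK 1)

lemma bisector {x p p' : E3} (hx : ‖x - p‖ = ‖x - p'‖) :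
    ⟪x - (1/2 : ℝ) • (p + p'), p' - p⟫ = 0 := by
  have hsq : ⟪x - p, x - p⟫ = ⟪x - p', x - p'⟫ := by
    rw [real_inner_self_eq_norm_mul_norm, real_inner_self_eq_norm_mul_norm, hx]
  simp only [inner_sub_left, inner_sub_right, inner_add_left, inner_add_right,
    real_inner_smul_left] at hsq ⊢
  linarith [real_inner_comm x p, real_inner_comm x p', real_inner_comm p p']

lemma inner_sub_mid {p p' : E3} :
    ⟪p - (1/2 : ℝ) • (p + p'), p' - p⟫ = -(1/2) * ⟪p' - p, p' - p⟫ := by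
  simp only [inner_sub_left, inner_sub_right, inner_add_left, inner_add_right,
    real_inner_smul_left]
  linarith [real_inner_comm p p']

lemma refl_bisector_point (p p' : E3) (hp : p ≠ p') :
    reflPlane ((1/2 : ℝ) • (p + p')) (p' - p) p = p' := by
  have hu : (⟪p' - p, p' - p⟫ : ℝ) ≠ 0 :=
    fun hc => (sub_ne_zero.2 (Ne.symm hp)) (inner_self_eq_zero.1 hc)
  have hkey : ∀ c : ℝ, c ≠ 0 → 2 * (-(1/2) * c) / c = -1 := by
    intro c hc; field_simp
  rw [reflPlane, reflVec, inner_sub_mid, hkey _ hu]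
  module

lemma refl_bisector_vec {p p' n n' : E3} {r : ℝ} (hr : r ≠ 0) (hnn : n ≠ n')
    (hnorm : ‖n‖ = ‖n'‖) (hu : p' - p = r • (n - n')) : reflVec (p' - p) n = n' := by
  have hnn0 : n - n' ≠ 0 := sub_ne_zero.2 hnn
  have hc : (⟪n - n', n - n'⟫ : ℝ) ≠ 0 := fun hc => hnn0 (inner_self_eq_zero.1 hc)
  have h1 : ⟪n, p' - p⟫ = r * ⟪n, n - n'⟫ := by rw [hu, real_inner_smul_right]
  have h2 : ⟪p' - p, p' - p⟫ = r ^ 2 * ⟪n - n', n - n'⟫ := by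
    rw [hu, real_inner_smul_left, real_inner_smul_right]; ring
  have hnn2 : (⟪n, n⟫ : ℝ) = ⟪n', n'⟫ := by
    rw [real_inner_self_eq_norm_mul_norm, real_inner_self_eq_norm_mul_norm, hnorm]
  have h3 : ⟪n, n - n'⟫ = (1/2) * ⟪n - n', n - n'⟫ := by
    simp only [inner_sub_left, inner_sub_right]
    linarith [real_inner_comm n n']
  have hkey : ∀ c s : ℝ, c ≠ 0 → s ≠ 0 → 2 * (s * (1/2 * c)) / (s ^ 2 * c) = 1 / s := by
    intro c s hc hs; field_simp
  have hcoef : (2 * ⟪n, p' - p⟫ / ⟪p' - p, p' - p⟫ : ℝ) = 1 / r := by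
    rw [h1, h3, h2]; exact hkey _ _ hc hr
  rw [reflVec, hcoef, hu, smul_smul, one_div, inv_mul_cancel₀ hr, one_smul, sub_sub_cancel]

lemma reflPlane_base_change {x₀ u a : E3} (x : E3) (ha : ⟪a - x₀, u⟫ = 0) :
    reflPlane x₀ u x = a + reflVec u (x - a) := by
  rw [reflPlane, show x - x₀ = (x - a) + (a - x₀) by abel,
    show reflVec u ((x - a) + (a - x₀)) = reflVec u (x - a) + reflVec u (a - x₀) from
      (reflVecL u).map_add _ _,
    reflVec_of_inner_eq_zero u _ ha]
  abel

lemma span_pair_finrank {x y : E3} (hli : LinearIndependent ℝ ![x, y]) :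
    finrank ℝ (Submodule.span ℝ {x, y} : Submodule ℝ E3) = 2 := by
  have hr : Set.range ![x, y] = {x, y} := by
    simp [Matrix.range_cons, Matrix.range_empty]
    exact Set.pair_comm y x
  rw [← hr, finrank_span_eq_card hli]
  simp

lemma orth_mem_span {U : Submodule ℝ E3} (hU : finrank ℝ U = 2) {d : E3} (hd : d ≠ 0)
    (hdU : d ∈ Uᗮ) {y : E3} (hy : y ∈ Uᗮ) : ∃ t : ℝ, y = t • d := by
  have hfin : finrank ℝ (Uᗮ : Submodule ℝ E3) = 1 := by
    have := Submodule.finrank_add_finrank_orthogonal (K := U)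
    rw [hU, finrank_euclideanSpace_fin] at this
    omega
  have hle : Submodule.span ℝ {d} ≤ Uᗮ := by
    rw [Submodule.span_le, Set.singleton_subset_iff]; exact hdU
  have heq : Submodule.span ℝ {d} = Uᗮ :=
    Submodule.eq_of_le_of_finrank_le hle (by rw [hfin, finrank_span_singleton hd])
  rw [← heq] at hy
  obtain ⟨t, ht⟩ := Submodule.mem_span_singleton.1 hy
  exact ⟨t, ht.symm⟩

lemma inner3' (a b : E3) : ⟪a, b⟫ = a 0 * b 0 + a 1 * b 1 + a 2 * b 2 := by
  simp [PiLp.inner_apply, Fin.sum_univ_three, mul_comm]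

lemma inner_cross3_left (a b : E3) : ⟪a, cross3 a b⟫ = 0 := by
  simp [inner3', cross3, Fin.sum_univ_three]; ring

lemma inner_cross3_right (a b : E3) : ⟪b, cross3 a b⟫ = 0 := by
  simp [inner3', cross3, Fin.sum_univ_three]; ring

lemma cross3_eq_zero_imp {a b : E3} (h : cross3 a b = 0) (ha : a ≠ 0) :
    ∃ c : ℝ, b = c • a := by
  have e0 : a 1 * b 2 - a 2 * b 1 = 0 := by simpa [cross3] using congrArg (fun v : E3 => v 0) h
  have e1 : a 2 * b 0 - a 0 * b 2 = 0 := by simpa [cross3] using congrArg (fun v : E3 => v 1) h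
  have e2 : a 0 * b 1 - a 1 * b 0 = 0 := by simpa [cross3] using congrArg (fun v : E3 => v 2) h
  have hi : a 0 ≠ 0 ∨ a 1 ≠ 0 ∨ a 2 ≠ 0 := by
    by_contra hc
    push_neg at hc
    exact ha (PiLp.ext fun i => by fin_cases i <;> simp [hc.1, hc.2.1, hc.2.2])
  rcases hi with h0 | h1 | h2'
  · exact ⟨b 0 / a 0, PiLp.ext fun i => by
      fin_cases i <;> simp [PiLp.smul_apply, smul_eq_mul] <;> field_simp <;> nlinarith⟩
  · exact ⟨b 1 / a 1, PiLp.ext fun i => by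
      fin_cases i <;> simp [PiLp.smul_apply, smul_eq_mul] <;> field_simp <;> nlinarith⟩
  · exact ⟨b 2 / a 2, PiLp.ext fun i => by
      fin_cases i <;> simp [PiLp.smul_apply, smul_eq_mul] <;> field_simp <;> nlinarith⟩

lemma reflVec_zero (u : E3) : reflVec u 0 = 0 := by simp [reflVec]

/-- **Lemma.** For two contact elements `(p, n)`, `(p', n')` with a common oriented
tangent sphere (touching point `h`): (i) the reflection in the bisector plane `β` of
`p` and `p'` maps `(p, n)` to `(p', n')` and fixes `h`; (ii) for every `k ∈ β` with
`p'`, `h`, `k` affinely independent, the composition of the reflections in `β` and in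
the plane `γ` through `p'`, `h`, `k` is a rotation about the line through `h` and `k`
mapping `(p, n)` to `(p', n')`; (iii) it is the unique such rotation. -/
theorem reflection_rotation_lemma
    (p n p' n' : E3) (hn : ‖n‖ = 1) (hn' : ‖n'‖ = 1)
    (r : ℝ) (h : E3) (hh : h = p + r • n)
    (hcts : p + r • n = p' + r • n')
    (hp : p ≠ p') (hne : n ≠ n') :
    -- (i)
    (‖h - p‖ = ‖h - p'‖ ∧
      reflPlane ((1 / 2 : ℝ) • (p + p')) (p' - p) p = p' ∧
      reflVec (p' - p) n = n') ∧
    -- (ii) and (iii)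
    (∀ k : E3, ‖k - p‖ = ‖k - p'‖ → AffineIndependent ℝ ![p', h, k] →
      ∃ R : E3 ≃ᵃⁱ[ℝ] E3,
        (∀ x : E3, R x = reflPlane p' (cross3 (h - p') (k - p'))
            (reflPlane ((1 / 2 : ℝ) • (p + p')) (p' - p) x)) ∧
        IsRotationAbout R h (k - h) ∧
        R p = p' ∧ R.linearIsometryEquiv n = n' ∧
        (∀ R' : E3 ≃ᵃⁱ[ℝ] E3, IsRotationAbout R' h (k - h) →
          R' p = p' → R'.linearIsometryEquiv n = n' → R' = R)) := by
  have hu0 : p' - p ≠ 0 := sub_ne_zero.2 (Ne.symm hp)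
  have huu : (⟪p' - p, p' - p⟫ : ℝ) ≠ 0 := fun hc => hu0 (inner_self_eq_zero.1 hc)
  have hr0 : r ≠ 0 := by
    intro h0; rw [h0] at hcts; simp at hcts; exact hp hcts
  have hu_eq : p' - p = r • (n - n') := by
    rw [smul_sub, sub_eq_sub_iff_add_eq_add, ← hcts]; abel
  have hhp : h - p = r • n := by rw [hh]; abel
  have hhp' : h - p' = r • n' := by rw [hh, hcts]; abel
  have hβh : ‖h - p‖ = ‖h - p'‖ := by rw [hhp, hhp', norm_smul, norm_smul, hn, hn']
  have hrefl_p : reflPlane ((1 / 2 : ℝ) • (p + p')) (p' - p) p = p' :=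
    refl_bisector_point p p' hp
  have hrefl_n : reflVec (p' - p) n = n' := refl_bisector_vec hr0 hne (by rw [hn, hn']) hu_eq
  refine ⟨⟨hβh, hrefl_p, hrefl_n⟩, ?_⟩
  intro k hk hind
  set u : E3 := p' - p with hu_def
  set m : E3 := (1 / 2 : ℝ) • (p + p') with hm_def
  set w : E3 := cross3 (h - p') (k - p') with hw_def
  have hmh : ⟪h - m, u⟫ = 0 := bisector hβh
  have hmk : ⟪k - m, u⟫ = 0 := bisector hk
  -- injectivity consequences
  have hinj := hind.injective
  have hhk : h ≠ k := by
    intro hc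
    have h12 : (![p', h, k] : Fin 3 → E3) 1 = ![p', h, k] 2 := by simp [hc]
    exact absurd (hinj h12) (by decide)
  have hp'h : p' ≠ h := by
    intro hc
    have h01 : (![p', h, k] : Fin 3 → E3) 0 = ![p', h, k] 1 := by simp [hc]
    exact absurd (hinj h01) (by decide)
  have hkh0 : k - h ≠ 0 := sub_ne_zero.2 (Ne.symm hhk)
  have hhp'0 : h - p' ≠ 0 := sub_ne_zero.2 (Ne.symm hp'h)
  have hw0 : w ≠ 0 := by
    intro hc
    obtain ⟨c, hcc⟩ := cross3_eq_zero_imp hc hhp'0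
    have hcol : Collinear ℝ (Set.range ![p', h, k]) := by
      have hmem : p' ∈ Set.range ![p', h, k] := ⟨0, rfl⟩
      rw [collinear_iff_of_mem hmem]
      refine ⟨h - p', fun q hq => ?_⟩
      obtain ⟨i, rfl⟩ := hq
      fin_cases i
      · exact ⟨0, by simp⟩
      · exact ⟨1, by simp⟩
      · exact ⟨c, by show k = c • (h - p') +ᵥ p'; rw [← hcc]; simp⟩
    exact (affineIndependent_iff_not_collinear.1 hind) hcol
  have hww : (⟪w, w⟫ : ℝ) ≠ 0 := fun hc => hw0 (inner_self_eq_zero.1 hc)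
  have haw : ⟪h - p', w⟫ = 0 := inner_cross3_left _ _
  have hbw : ⟪k - p', w⟫ = 0 := inner_cross3_right _ _
  have hkh_w : ⟪k - h, w⟫ = 0 := by
    rw [show k - h = (k - p') - (h - p') by abel, inner_sub_left, haw, hbw]; ring
  have hkh_u : ⟪k - h, u⟫ = 0 := by
    rw [show k - h = (k - m) - (h - m) by abel, inner_sub_left, hmh, hmk]; ring
  have hn'w : ⟪n', w⟫ = 0 := by
    have h1 : ⟪h - p', w⟫ = r * ⟪n', w⟫ := by rw [hhp', real_inner_smul_left]
    rw [h1] at haw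
    exact (mul_eq_zero.1 haw).resolve_left hr0
  have hp'h_u : ⟪p' - h, u⟫ = (1/2) * ⟪u, u⟫ := by
    rw [show p' - h = (p' - m) - (h - m) by abel, inner_sub_left, hmh, sub_zero,
      hm_def, hu_def, show p' - (1 / 2 : ℝ) • (p + p') = -(p - (1 / 2 : ℝ) • (p + p')) by module,
      inner_neg_left, inner_sub_mid]
    ring
  have hp'h_u0 : ⟪p' - h, u⟫ ≠ 0 := by
    rw [hp'h_u]; intro hc; exact huu (by linarith)
  have hph_u : ⟪p - h, u⟫ = -(1/2) * ⟪u, u⟫ := by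
    rw [show p - h = (p - m) - (h - m) by abel, inner_sub_left, hmh, sub_zero, hm_def, hu_def,
      inner_sub_mid]
  have hph_u0 : ⟪p - h, u⟫ ≠ 0 := by
    rw [hph_u]; intro hc; exact huu (by linarith)
  -- the linear part
  set L : E3 ≃ₗᵢ[ℝ] E3 := (reflIso u huu).trans (reflIso w hww) with hL_def
  have hLx : ∀ x : E3, L x = reflVec w (reflVec u x) := fun x => rfl
  have hfx : ∀ x : E3, reflPlane p' w (reflPlane m u x) = h + L (x - h) := by
    intro x
    rw [reflPlane_base_change (a := h) x hmh, reflPlane_base_change (a := h) _ haw,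
      add_sub_cancel_left, hLx]
  have hfh : reflPlane p' w (reflPlane m u h) = h := by
    rw [hfx h, sub_self, map_zero, add_zero]
  have hprop : ∀ x : E3, reflPlane p' w (reflPlane m u x)
      = L (x -ᵥ h) +ᵥ reflPlane p' w (reflPlane m u h) := by
    intro x
    rw [hfx x, hfh]
    show h + L (x - h) = L (x - h) + h
    abel
  set R : E3 ≃ᵃⁱ[ℝ] E3 :=
    AffineIsometryEquiv.mk' (fun x => reflPlane p' w (reflPlane m u x)) L h hprop with hR_def
  have hRx : ∀ x : E3, R x = reflPlane p' w (reflPlane m u x) := fun x => rfl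
  have hRlin : R.linearIsometryEquiv = L :=
    AffineIsometryEquiv.linearIsometryEquiv_mk' _ _ _ _
  have hRp : R p = p' := by
    rw [hRx, hrefl_p, reflPlane, sub_self, reflVec_zero, add_zero]
  have hRn : R.linearIsometryEquiv n = n' := by
    rw [hRlin, hLx, hrefl_n, reflVec_of_inner_eq_zero w n' hn'w]
  have hdetL : LinearMap.det L.toLinearEquiv.toLinearMap = 1 := by
    have hcomp : L.toLinearEquiv.toLinearMap
        = ((reflIso w hww).toLinearEquiv.toLinearMap).comp
          ((reflIso u huu).toLinearEquiv.toLinearMap) := rfl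
    rw [hcomp, LinearMap.det_comp, det_reflIso, det_reflIso]; norm_num
  -- fixed point set
  have hfixiff : ∀ x : E3, R x = x ↔ x ∈ line h (k - h) := by
    intro x
    constructor
    · intro hfixx
      rw [hRx, hfx] at hfixx
      have hy : L (x - h) = x - h := by
        have := hfixx
        rw [add_comm] at this
        exact by
          have h2 : L (x - h) + h - h = x - h := by rw [this]
          simpa using h2
      rw [hLx] at hy
      have hy2 : reflVec u (x - h) = reflVec w (x - h) := by
        have := congrArg (reflVec w) hy
        rwa [reflVec_involutive w hww] at this
      have hAB : (2 * ⟪x - h, u⟫ / ⟪u, u⟫) • u = (2 * ⟪x - h, w⟫ / ⟪w, w⟫) • w := by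
        have h3 : (x - h) - (2 * ⟪x - h, u⟫ / ⟪u, u⟫) • u
            = (x - h) - (2 * ⟪x - h, w⟫ / ⟪w, w⟫) • w := hy2
        exact sub_right_inj.1 h3
      have hwp'h : ⟪w, p' - h⟫ = 0 := by
        rw [real_inner_comm, show p' - h = -(h - p') by abel, inner_neg_left, haw]; ring
      have hinner := congrArg (fun v : E3 => ⟪v, p' - h⟫) hAB
      simp only [real_inner_smul_left, hwp'h, mul_zero] at hinner
      have hcu : (2 * ⟪x - h, u⟫ / ⟪u, u⟫ : ℝ) = 0 := by
        rcases mul_eq_zero.1 hinner with hc | hc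
        · exact hc
        · exact absurd (real_inner_comm u (p' - h) ▸ hc) hp'h_u0
      have hxu : ⟪x - h, u⟫ = 0 := by
        rcases div_eq_zero_iff.1 hcu with hc | hc
        · linarith
        · exact absurd hc huu
      have hxw : ⟪x - h, w⟫ = 0 := by
        rw [hcu, zero_smul] at hAB
        have := hAB.symm
        rcases smul_eq_zero.1 this with hc | hc
        · rcases div_eq_zero_iff.1 hc with hc2 | hc2
          · linarith
          · exact absurd hc2 hww
        · exact absurd hc hw0
      -- x - h is orthogonal to span {u, w}
      have hli : LinearIndependent ℝ ![u, w] := by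
        rw [LinearIndependent.pair_iff]
        intro s t hst
        have := congrArg (fun v : E3 => ⟪v, p' - h⟫) hst
        simp only [inner_add_left, real_inner_smul_left, hwp'h, mul_zero, add_zero,
          inner_zero_left] at this
        have hs : s = 0 := by
          rcases mul_eq_zero.1 this with hc | hc
          · exact hc
          · exact absurd (real_inner_comm u (p' - h) ▸ hc) hp'h_u0
        refine ⟨hs, ?_⟩
        rw [hs, zero_smul, zero_add] at hst
        rcases smul_eq_zero.1 hst with hc | hc
        · exact hc
        · exact absurd hc hw0
      have hUfin : Module.finrank ℝ (Submodule.span ℝ {u, w} : Submodule ℝ E3) = 2 :=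
        span_pair_finrank hli
      have hmemO : ∀ y : E3, ⟪y, u⟫ = 0 → ⟪y, w⟫ = 0 →
          y ∈ (Submodule.span ℝ {u, w} : Submodule ℝ E3)ᗮ := by
        intro y h1 h2
        rw [Submodule.mem_orthogonal]
        intro v hv
        obtain ⟨a, b, rfl⟩ := Submodule.mem_span_pair.1 hv
        have h1' : ⟪u, y⟫ = 0 := by rw [real_inner_comm]; exact h1
        have h2' : ⟪w, y⟫ = 0 := by rw [real_inner_comm]; exact h2
        rw [inner_add_left, real_inner_smul_left, real_inner_smul_left, h1', h2']
        ring
      obtain ⟨t, ht⟩ := orth_mem_span hUfin hkh0 (hmemO _ hkh_u hkh_w) (hmemO _ hxu hxw)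
      exact ⟨t, by rw [← ht]; abel⟩
    · rintro ⟨t, rfl⟩
      rw [hRx, hfx, add_sub_cancel_left, hLx,
        reflVec_of_inner_eq_zero u _ (by rw [real_inner_smul_left, hkh_u]; ring),
        reflVec_of_inner_eq_zero w _ (by rw [real_inner_smul_left, hkh_w]; ring)]
  have hRh : R h = h := (hfixiff h).2 ⟨0, by simp⟩
  have hRk : R k = k := (hfixiff k).2 ⟨1, by rw [one_smul]; abel⟩
  refine ⟨R, hRx, ⟨hkh0, ?_, ?_, hfixiff⟩, hRp, hRn, ?_⟩
  · rw [hRlin]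
    rw [hdetL]
    norm_num
  · intro hc
    have : R p = p := by rw [hc]; rfl
    exact hp (hRp.symm.trans this).symm
  -- uniqueness
  · intro R' hrot' hR'p hR'n
    obtain ⟨-, hdet', -, hfix'⟩ := hrot'
    set L' : E3 ≃ₗᵢ[ℝ] E3 := R'.linearIsometryEquiv with hL'_def
    have hR'h : R' h = h := (hfix' h).2 ⟨0, by simp⟩
    have hR'k : R' k = k := (hfix' k).2 ⟨1, by rw [one_smul]; abel⟩
    have hL'e : L' (k - h) = k - h := by
      have := R'.map_vsub k h
      rw [hR'k, hR'h] at this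
      simpa [vsub_eq_sub] using this
    have hL'v : L' (p - h) = p' - h := by
      have := R'.map_vsub p h
      rw [hR'p, hR'h] at this
      simpa [vsub_eq_sub] using this
    have hLe : L (k - h) = k - h := by
      have := R.map_vsub k h
      rw [hRk, hRh, hRlin] at this
      simpa [vsub_eq_sub] using this
    have hLv : L (p - h) = p' - h := by
      have := R.map_vsub p h
      rw [hRp, hRh, hRlin] at this
      simpa [vsub_eq_sub] using this
    set T : E3 ≃ₗᵢ[ℝ] E3 := L'.trans L.symm with hT_def
    have hTx : ∀ x : E3, T x = L.symm (L' x) := fun x => rfl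
    have hTe : T (k - h) = k - h := by
      rw [hTx, hL'e]
      conv_lhs => rw [← hLe]
      exact L.symm_apply_apply _
    have hTv : T (p - h) = p - h := by
      rw [hTx, hL'v]
      conv_lhs => rw [← hLv]
      exact L.symm_apply_apply _
    have hev_li : LinearIndependent ℝ ![k - h, p - h] := by
      rw [LinearIndependent.pair_iff]
      intro s t hst
      have := congrArg (fun v : E3 => ⟪v, u⟫) hst
      simp only [inner_add_left, real_inner_smul_left, hkh_u, mul_zero, zero_add,
        inner_zero_left] at this
      have ht : t = 0 := by
        rcases mul_eq_zero.1 this with hc | hc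
        · exact hc
        · exact absurd hc hph_u0
      refine ⟨?_, ht⟩
      rw [ht, zero_smul, add_zero] at hst
      rcases smul_eq_zero.1 hst with hc | hc
      · exact hc
      · exact absurd hc hkh0
    have hWfin : Module.finrank ℝ (Submodule.span ℝ {k - h, p - h} : Submodule ℝ E3) = 2 :=
      span_pair_finrank hev_li
    have hWofin : Module.finrank ℝ
        ((Submodule.span ℝ {k - h, p - h} : Submodule ℝ E3)ᗮ : Submodule ℝ E3) = 1 := by
      have := Submodule.finrank_add_finrank_orthogonal
        (K := (Submodule.span ℝ {k - h, p - h} : Submodule ℝ E3))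
      rw [hWfin, finrank_euclideanSpace_fin] at this
      omega
    obtain ⟨z, hzW, hz0⟩ :=
        ((Submodule.span ℝ {k - h, p - h} : Submodule ℝ E3)ᗮ).ne_bot_iff.1 (by
      intro hbot
      rw [hbot] at hWofin
      simp at hWofin)
    have hTz_mem : T z ∈ (Submodule.span ℝ {k - h, p - h} : Submodule ℝ E3)ᗮ := by
      rw [Submodule.mem_orthogonal]
      intro v hv
      obtain ⟨a, b, rfl⟩ := Submodule.mem_span_pair.1 hv
      have hTfix : T (a • (k - h) + b • (p - h)) = a • (k - h) + b • (p - h) := by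
        rw [map_add, map_smul, map_smul, hTe, hTv]
      rw [← hTfix, LinearIsometryEquiv.inner_map_map]
      exact (Submodule.mem_orthogonal _ z).1 hzW _ hv
    obtain ⟨c, hc⟩ := orth_mem_span hWfin hz0 hzW hTz_mem
    have hcabs : c = 1 ∨ c = -1 := by
      have hnm := T.norm_map z
      rw [hc, norm_smul] at hnm
      have hz0' : ‖z‖ ≠ 0 := norm_ne_zero_iff.2 hz0
      have habs : |c| = 1 :=
        mul_right_cancel₀ hz0' (hnm.trans (one_mul ‖z‖).symm)
      exact (abs_eq (by norm_num : (0:ℝ) ≤ 1)).1 habs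
    have hzsp : z ∉ Submodule.span ℝ (Set.range ![k - h, p - h]) := by
      rw [show Set.range ![k - h, p - h] = {k - h, p - h} by
        simp [Matrix.range_cons, Matrix.range_empty]
        exact Set.pair_comm (p - h) (k - h)]
      intro hz
      exact hz0 (inner_self_eq_zero.1 ((Submodule.mem_orthogonal _ z).1 hzW z hz))
    have hli3 : LinearIndependent ℝ (Fin.cons z ![k - h, p - h] : Fin 3 → E3) :=
      linearIndependent_fin_cons.2 ⟨hev_li, hzsp⟩
    set b3 : Basis (Fin 3) ℝ E3 := basisOfLinearIndependentOfCardEqFinrank hli3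
      (by simp [finrank_euclideanSpace_fin]) with hb3_def
    have hb3 : ⇑b3 = Fin.cons z ![k - h, p - h] :=
      coe_basisOfLinearIndependentOfCardEqFinrank _ _
    rcases hcabs with hc1 | hcm1
    · -- T is the identity, hence R' = R
      have hTid : T.toLinearEquiv.toLinearMap = LinearMap.id := by
        apply b3.ext
        intro i
        fin_cases i
        · show T (b3 0) = b3 0
          rw [hb3, show (Fin.cons z ![k - h, p - h] : Fin 3 → E3) 0 = z from rfl, hc, hc1,
            one_smul]
        · show T (b3 1) = b3 1
          rw [hb3, show (Fin.cons z ![k - h, p - h] : Fin 3 → E3) 1 = k - h from rfl, hTe]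
        · show T (b3 2) = b3 2
          rw [hb3, show (Fin.cons z ![k - h, p - h] : Fin 3 → E3) 2 = p - h from rfl, hTv]
      have hLL' : ∀ x : E3, L' x = L x := by
        intro x
        have hx : T x = x := LinearMap.congr_fun hTid x
        rw [hTx] at hx
        rw [← LinearIsometryEquiv.apply_symm_apply L (L' x), hx]
      apply AffineIsometryEquiv.ext
      intro x
      have e1 := R'.map_vsub x h
      rw [hR'h] at e1
      have e2 := R.map_vsub x h
      rw [hRh, hRlin] at e2
      have : R' x - h = R x - h := by
        rw [show R' x - h = R' x -ᵥ h from rfl, ← e1,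
          show R x - h = R x -ᵥ h from rfl, ← e2]
        exact hLL' _
      exact sub_left_inj.1 this
    · -- contradiction with orientation
      exfalso
      have hdT : LinearMap.det T.toLinearEquiv.toLinearMap = -1 := by
        apply det_neg_one b3
        · rw [hb3, show (Fin.cons z ![k - h, p - h] : Fin 3 → E3) 0 = z from rfl]
          show T z = -z
          rw [hc, hcm1, neg_smul, one_smul]
        · rw [hb3, show (Fin.cons z ![k - h, p - h] : Fin 3 → E3) 1 = k - h from rfl]
          exact hTe
        · rw [hb3, show (Fin.cons z ![k - h, p - h] : Fin 3 → E3) 2 = p - h from rfl]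
          exact hTv
      have hdc : LinearMap.det ((L.toLinearEquiv.toLinearMap).comp (T.toLinearEquiv.toLinearMap))
          = LinearMap.det L'.toLinearEquiv.toLinearMap := by
        congr 1
        exact LinearMap.ext fun x => L.apply_symm_apply (L' x)
      rw [LinearMap.det_comp, hdetL, hdT, one_mul] at hdc
      linarith
end
end
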